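/- arXiv:1210.1190 — 2 statements merged into one kernel-verified Lean document; each statement's English description precedes it below -/
import Mathlib

section
/- (Correctness of the XRAY detection step) Let X ∈ ℝ₊^{m×n} with nonzero columns satisfy X = X_A H with H ≥ 0, where A indexes the generators of the extreme rays of cone(X). Let Aᵗ ⊆ A be a current subset of anchors, let R = X − X_{Aᵗ} H* where H* = argmin_{B ≥ 0} ‖X − X_{Aᵗ} B‖_F², and suppose column i satisfies Rᵢ ≠ 0. Let p be strictly positive, and set j* = argmax_j Rᵢᵀ Xⱼ/(pᵀXⱼ). If the maximizer j* is unique, then j* ∈ A \ Aᵗ, i.e., X_{j*} generates an extreme ray of cone(X) not previously selected. -/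
open Matrix

lemma quadA (c s : ℝ) (h : ∀ t : ℝ, 0 ≤ t → 0 ≤ -2*t*c + t^2*s) : c ≤ 0 := by
  by_contra hc
  push_neg at hc
  have hs : 0 ≤ s := by nlinarith [h 1 zero_le_one, h 0 le_rfl]
  have hs1 : 0 < s + 1 := by linarith
  have ht : 0 ≤ c/(s+1) := by positivity
  have h2 := h (c/(s+1)) ht
  have e : c/(s+1)*(s+1) = c := by field_simp
  nlinarith [mul_pos hs1 hs1, sq_nonneg (c/(s+1))]

lemma quadB (c s : ℝ) (h : ∀ t : ℝ, -1 < t → 0 ≤ -2*t*c + t^2*s) : c = 0 := by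
  have hs : 0 ≤ s := by nlinarith [h 1 (by norm_num), h (-1/2) (by norm_num)]
  by_contra hc
  have hc2 : 0 < c^2 := by positivity
  have hD : (0:ℝ) < s + c^2 + 1 := by positivity
  set t := c/(s+c^2+1) with hT
  have ht : -1 < t := by
    rw [hT, neg_lt, ← neg_div, div_lt_one hD]
    nlinarith [sq_nonneg (c+1)]
  have h2 := h _ ht
  have e : t*(s+c^2+1) = c := by rw [hT]; field_simp
  have h3 := mul_nonneg (mul_pos hD hD).le h2
  have h4 : (s+c^2+1)*(s+c^2+1)*(-2 * t * c + t ^ 2 * s) =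
      -2*(t*(s+c^2+1))*c*(s+c^2+1) + (t*(s+c^2+1))*(t*(s+c^2+1))*s := by ring
  rw [h4, e] at h3
  nlinarith

lemma expand_sq (m : ℕ) (r w : Fin m → ℝ) (t : ℝ) :
    ∑ i, (r i - t * w i)^2 =
      ∑ i, (r i)^2 + (-2*t*(∑ i, r i * w i) + t^2 * ∑ i, (w i)^2) := by
  rw [Finset.mul_sum, Finset.mul_sum, ← Finset.sum_add_distrib, ← Finset.sum_add_distrib]
  exact Finset.sum_congr rfl fun i _ => by ring

/-- Reduce the global minimality to the single column `i0`. -/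
lemma col_min (n : ℕ) (F G : Fin n → ℝ) (i0 : Fin n)
    (h : ∑ j, F j ≤ ∑ j, G j) (he : ∀ j, j ≠ i0 → F j = G j) : F i0 ≤ G i0 := by
  classical
  rw [← Finset.add_sum_erase Finset.univ F (Finset.mem_univ i0),
      ← Finset.add_sum_erase Finset.univ G (Finset.mem_univ i0)] at h
  have : ∑ j ∈ Finset.univ.erase i0, F j = ∑ j ∈ Finset.univ.erase i0, G j :=
    Finset.sum_congr rfl fun j hj => he j (Finset.ne_of_mem_erase hj)
  linarith

/-- Correctness of the XRAY detection step: the unique maximizer of the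
detection criterion is an anchor not previously selected. -/
theorem stmt7 (m n : ℕ) (X : Matrix (Fin m) (Fin n) ℝ)
    (hX : ∀ i j, 0 ≤ X i j) (hcol : ∀ j, (fun i => X i j) ≠ 0)
    (A : Finset (Fin n)) (H : Fin n → Fin n → ℝ) (hH : ∀ a j, 0 ≤ H a j)
    (hsep : ∀ j i, X i j = ∑ a ∈ A, H a j * X i a)
    (hanch : ∀ a ∈ A, ¬ ∃ c : Fin n → ℝ, (∀ k, 0 ≤ c k) ∧ c a = 0 ∧
      ∀ i, X i a = ∑ k, c k * X i k)
    (At : Finset (Fin n)) (hAt : At ⊆ A)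
    (Hs : Fin n → Fin n → ℝ) (hHs : ∀ a j, 0 ≤ Hs a j)
    (hmin : ∀ B : Fin n → Fin n → ℝ, (∀ a j, 0 ≤ B a j) →
      (∑ j, ∑ i, (X i j - ∑ a ∈ At, Hs a j * X i a) ^ 2) ≤
        ∑ j, ∑ i, (X i j - ∑ a ∈ At, B a j * X i a) ^ 2)
    (R : Matrix (Fin m) (Fin n) ℝ)
    (hR : ∀ i j, R i j = X i j - ∑ a ∈ At, Hs a j * X i a)
    (i0 : Fin n) (hRi : (fun i => R i i0) ≠ 0)
    (p : Fin m → ℝ) (hp : ∀ i, 0 < p i)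
    (jstar : Fin n)
    (hmax : ∀ j, j ≠ jstar →
      (∑ i, R i i0 * X i j) / (∑ i, p i * X i j) <
        (∑ i, R i i0 * X i jstar) / (∑ i, p i * X i jstar)) :
    jstar ∈ A \ At := by
  classical
  -- denominators are positive
  have hd : ∀ j, 0 < ∑ i, p i * X i j := by
    intro j
    obtain ⟨i, hi⟩ : ∃ i, X i j ≠ 0 := by
      by_contra hco; push_neg at hco
      exact hcol j (funext fun i => hco i)
    exact Finset.sum_pos' (fun i _ => mul_nonneg (hp i).le (hX i j))
      ⟨i, Finset.mem_univ i, mul_pos (hp i) (lt_of_le_of_ne (hX i j) (Ne.symm hi))⟩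
  -- KKT stationarity: R_{i0}ᵀ X_a ≤ 0 for a ∈ At
  have kkt1 : ∀ a0 ∈ At, ∑ i, R i i0 * X i a0 ≤ 0 := by
    intro a0 ha0
    apply quadA _ (∑ i, (X i a0)^2)
    intro t ht
    set B : Fin n → Fin n → ℝ := fun a j => if j = i0 ∧ a = a0 then Hs a j + t else Hs a j
      with hB
    have hBnn : ∀ a j, 0 ≤ B a j := by
      intro a j; rw [hB]; dsimp only
      split
      · exact add_nonneg (hHs a j) ht
      · exact hHs a j
    have key := hmin B hBnn
    have he : ∀ j, j ≠ i0 →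
        (∑ i, (X i j - ∑ a ∈ At, Hs a j * X i a)^2) =
          ∑ i, (X i j - ∑ a ∈ At, B a j * X i a)^2 := by
      intro j hj
      apply Finset.sum_congr rfl
      intro i _
      have hBa : ∀ a, B a j = Hs a j := by
        intro a; rw [hB]; dsimp only
        rw [if_neg]; rintro ⟨h1, _⟩; exact hj h1
      simp_rw [hBa]
    have hcm := col_min n _ _ i0 key he
    have eL : (∑ i, (X i i0 - ∑ a ∈ At, Hs a i0 * X i a)^2) = ∑ i, (R i i0)^2 :=
      Finset.sum_congr rfl fun i _ => by rw [← hR]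
    have eR : (∑ i, (X i i0 - ∑ a ∈ At, B a i0 * X i a)^2) =
        ∑ i, (R i i0 - t * X i a0)^2 := by
      apply Finset.sum_congr rfl
      intro i _
      congr 1
      have hsum : ∑ a ∈ At, B a i0 * X i a =
          ∑ a ∈ At, (Hs a i0 * X i a + if a = a0 then t * X i a else 0) := by
        apply Finset.sum_congr rfl
        intro a _
        rw [hB]; dsimp only
        by_cases h : a = a0
        · subst h; rw [if_pos ⟨rfl, rfl⟩, if_pos rfl]; ring
        · rw [if_neg (by rintro ⟨_, h2⟩; exact h h2), if_neg h]; ring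
      rw [hsum, Finset.sum_add_distrib, Finset.sum_ite_eq' At a0 (fun a => t * X i a),
        if_pos ha0, hR]
      ring
    rw [eL, eR, expand_sq] at hcm
    linarith
  -- KKT complementarity: R_{i0}ᵀ (X_{At} Hs_{i0}) = 0
  have kkt2 : ∑ i, R i i0 * (∑ a ∈ At, Hs a i0 * X i a) = 0 := by
    apply quadB _ (∑ i, (∑ a ∈ At, Hs a i0 * X i a)^2)
    intro t ht
    set B : Fin n → Fin n → ℝ := fun a j => if j = i0 then (1+t) * Hs a j else Hs a j
      with hB
    have hBnn : ∀ a j, 0 ≤ B a j := by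
      intro a j; rw [hB]; dsimp only
      split
      · exact mul_nonneg (by linarith) (hHs a j)
      · exact hHs a j
    have key := hmin B hBnn
    have he : ∀ j, j ≠ i0 →
        (∑ i, (X i j - ∑ a ∈ At, Hs a j * X i a)^2) =
          ∑ i, (X i j - ∑ a ∈ At, B a j * X i a)^2 := by
      intro j hj
      apply Finset.sum_congr rfl
      intro i _
      have hBa : ∀ a, B a j = Hs a j := by
        intro a; rw [hB]; dsimp only; rw [if_neg hj]
      simp_rw [hBa]
    have hcm := col_min n _ _ i0 key he
    have eL : (∑ i, (X i i0 - ∑ a ∈ At, Hs a i0 * X i a)^2) = ∑ i, (R i i0)^2 :=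
      Finset.sum_congr rfl fun i _ => by rw [← hR]
    have eR : (∑ i, (X i i0 - ∑ a ∈ At, B a i0 * X i a)^2) =
        ∑ i, (R i i0 - t * (∑ a ∈ At, Hs a i0 * X i a))^2 := by
      apply Finset.sum_congr rfl
      intro i _
      congr 1
      have hsum : ∑ a ∈ At, B a i0 * X i a = (1+t) * ∑ a ∈ At, Hs a i0 * X i a := by
        rw [Finset.mul_sum]
        apply Finset.sum_congr rfl
        intro a _
        rw [hB]; dsimp only; rw [if_pos rfl]; ring
      rw [hsum, hR]
      ring
    rw [eL, eR, expand_sq] at hcm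
    linarith
  -- positivity of the criterion numerator at i0
  have hpos : 0 < ∑ i, R i i0 * X i i0 := by
    have e1 : ∑ i, R i i0 * X i i0 =
        ∑ i, (R i i0)^2 + ∑ i, R i i0 * (∑ a ∈ At, Hs a i0 * X i a) := by
      rw [← Finset.sum_add_distrib]
      apply Finset.sum_congr rfl
      intro i _
      have : X i i0 = R i i0 + ∑ a ∈ At, Hs a i0 * X i a := by rw [hR]; ring
      rw [this]; ring
    rw [e1, kkt2, add_zero]
    obtain ⟨i, hi⟩ : ∃ i, R i i0 ≠ 0 := by
      by_contra hco; push_neg at hco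
      exact hRi (funext fun i => hco i)
    exact Finset.sum_pos' (fun i _ => sq_nonneg _)
      ⟨i, Finset.mem_univ i, by positivity⟩
  -- jstar ∉ At
  have hnotin : jstar ∉ At := by
    intro hj
    have h1 : ∑ i, R i i0 * X i jstar ≤ 0 := kkt1 jstar hj
    have h2 : (∑ i, R i i0 * X i jstar) / (∑ i, p i * X i jstar) ≤ 0 :=
      div_nonpos_of_nonpos_of_nonneg h1 (hd jstar).le
    have h3 : 0 < (∑ i, R i i0 * X i i0) / (∑ i, p i * X i i0) := div_pos hpos (hd i0)
    by_cases hii : i0 = jstar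
    · rw [← hii] at h2; linarith
    · linarith [hmax i0 hii]
  -- jstar ∈ A
  have hin : jstar ∈ A := by
    by_contra hjA
    set F := (∑ i, R i i0 * X i jstar) / (∑ i, p i * X i jstar) with hF
    have hcd : ∑ i, R i i0 * X i jstar =
        ∑ a ∈ A, H a jstar * ∑ i, R i i0 * X i a := by
      calc ∑ i, R i i0 * X i jstar
          = ∑ i, ∑ a ∈ A, R i i0 * (H a jstar * X i a) := by
            exact Finset.sum_congr rfl fun i _ => by rw [hsep jstar i, Finset.mul_sum]
        _ = ∑ a ∈ A, ∑ i, R i i0 * (H a jstar * X i a) := Finset.sum_comm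
        _ = ∑ a ∈ A, H a jstar * ∑ i, R i i0 * X i a := by
            refine Finset.sum_congr rfl fun a _ => ?_
            rw [Finset.mul_sum]
            exact Finset.sum_congr rfl fun i _ => by ring
    have hdd : ∑ i, p i * X i jstar =
        ∑ a ∈ A, H a jstar * ∑ i, p i * X i a := by
      calc ∑ i, p i * X i jstar
          = ∑ i, ∑ a ∈ A, p i * (H a jstar * X i a) := by
            exact Finset.sum_congr rfl fun i _ => by rw [hsep jstar i, Finset.mul_sum]
        _ = ∑ a ∈ A, ∑ i, p i * (H a jstar * X i a) := Finset.sum_comm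
        _ = ∑ a ∈ A, H a jstar * ∑ i, p i * X i a := by
            refine Finset.sum_congr rfl fun a _ => ?_
            rw [Finset.mul_sum]
            exact Finset.sum_congr rfl fun i _ => by ring
    have hlt : ∀ a ∈ A, ∑ i, R i i0 * X i a < F * ∑ i, p i * X i a := by
      intro a ha
      have hne : a ≠ jstar := fun h => hjA (h ▸ ha)
      exact (div_lt_iff₀ (hd a)).mp (hmax a hne)
    have hle : ∀ a ∈ A, H a jstar * ∑ i, R i i0 * X i a ≤
        H a jstar * (F * ∑ i, p i * X i a) := fun a ha =>
      mul_le_mul_of_nonneg_left (hlt a ha).le (hH a jstar)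
    obtain ⟨a, ha, haa⟩ : ∃ a ∈ A, 0 < H a jstar := by
      by_contra hco; push_neg at hco
      have : ∑ a ∈ A, H a jstar * ∑ i, p i * X i a ≤ 0 :=
        Finset.sum_nonpos fun a ha =>
          mul_nonpos_of_nonpos_of_nonneg (hco a ha) (hd a).le
      rw [← hdd] at this
      linarith [hd jstar]
    have hstrict : ∑ a ∈ A, H a jstar * ∑ i, R i i0 * X i a <
        ∑ a ∈ A, H a jstar * (F * ∑ i, p i * X i a) :=
      Finset.sum_lt_sum hle ⟨a, ha, mul_lt_mul_of_pos_left (hlt a ha) haa⟩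
    have hfd : F * ∑ i, p i * X i jstar = ∑ i, R i i0 * X i jstar := by
      rw [hF]
      exact div_mul_cancel₀ _ (hd jstar).ne'
    have : ∑ a ∈ A, H a jstar * (F * ∑ i, p i * X i a) =
        F * ∑ a ∈ A, H a jstar * ∑ i, p i * X i a := by
      rw [Finset.mul_sum]
      exact Finset.sum_congr rfl fun a _ => by ring
    rw [← hcd, this, ← hdd, hfd] at hstrict
    exact lt_irrefl _ hstrict
  exact Finset.mem_sdiff.mpr ⟨hin, hnotin⟩
end

section
/- Let X ∈ ℝ₊^{m×n}, let Aᵗ index a subset of columns, and let H* = argmin_{B ≥ 0} ‖X − X_{Aᵗ}B‖_F² with residual R = X − X_{Aᵗ}H*. If some column Xᵢ ∉ cone(X_{Aᵗ}), then the detection criterion max_j Rᵢᵀ Xⱼ/(pᵀXⱼ) (p strictly positive) is attained at an index outside Aᵗ, and its value is strictly positive. -/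
open Matrix

/-- If some column lies outside the current cone, the detection criterion is
maximized at an index outside Aᵗ with strictly positive value. -/
theorem stmt8 (m n : ℕ) (X : Matrix (Fin m) (Fin n) ℝ)
    (hX : ∀ i j, 0 ≤ X i j) (hcol : ∀ j, (fun i => X i j) ≠ 0)
    (At : Finset (Fin n))
    (Hs : Fin n → Fin n → ℝ) (hHs : ∀ a j, 0 ≤ Hs a j)
    (hmin : ∀ B : Fin n → Fin n → ℝ, (∀ a j, 0 ≤ B a j) →
      (∑ j, ∑ i, (X i j - ∑ a ∈ At, Hs a j * X i a) ^ 2) ≤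
        ∑ j, ∑ i, (X i j - ∑ a ∈ At, B a j * X i a) ^ 2)
    (R : Matrix (Fin m) (Fin n) ℝ)
    (hR : ∀ i j, R i j = X i j - ∑ a ∈ At, Hs a j * X i a)
    (i0 : Fin n)
    (hout : ¬ ∃ c : Fin n → ℝ, (∀ a, 0 ≤ c a) ∧
      ∀ i, X i i0 = ∑ a ∈ At, c a * X i a)
    (p : Fin m → ℝ) (hp : ∀ i, 0 < p i) (hpx : ∀ j, 0 < ∑ i, p i * X i j) :
    ∃ j, j ∉ At ∧
      0 < (∑ i, R i i0 * X i j) / (∑ i, p i * X i j) ∧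
      ∀ k, (∑ i, R i i0 * X i k) / (∑ i, p i * X i k) ≤
        (∑ i, R i i0 * X i j) / (∑ i, p i * X i j) := by
  classical
  set v : Fin n → ℝ := fun a => ∑ i, R i i0 * X i a with hv
  have hq : ∀ a : Fin n, 0 < ∑ i, (X i a) ^ 2 := by
    intro a
    have hne := hcol a
    have : ∃ i, X i a ≠ 0 := by
      by_contra h
      push_neg at h
      exact hne (funext h)
    obtain ⟨i, hi⟩ := this
    exact Finset.sum_pos' (fun k _ => sq_nonneg _)
      ⟨i, Finset.mem_univ i, by positivity⟩
  -- key perturbation inequality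
  have key : ∀ a ∈ At, ∀ ε : ℝ, 0 ≤ Hs a i0 + ε →
      0 ≤ -2 * ε * v a + ε ^ 2 * ∑ i, (X i a) ^ 2 := by
    intro a ha ε hε
    set B : Fin n → Fin n → ℝ :=
      fun a' j' => if a' = a ∧ j' = i0 then Hs a i0 + ε else Hs a' j' with hB
    have hBpos : ∀ a' j, 0 ≤ B a' j := by
      intro a' j
      simp only [hB]
      split
      · exact hε
      · exact hHs a' j
    have hle := hmin B hBpos
    set S : (Fin n → Fin n → ℝ) → Fin n → ℝ :=
      fun C j => ∑ i, (X i j - ∑ a' ∈ At, C a' j * X i a') ^ 2 with hS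
    have hSeq : ∀ j, j ≠ i0 → S B j = S Hs j := by
      intro j hj
      refine Finset.sum_congr rfl fun i _ => ?_
      congr 2
      refine Finset.sum_congr rfl fun a' _ => ?_
      simp [hB, hj]
    have hi0sum : ∀ i, (∑ a' ∈ At, B a' i0 * X i a') =
        (∑ a' ∈ At, Hs a' i0 * X i a') + ε * X i a := by
      intro i
      have hcong : ∀ b ∈ At, B b i0 * X i b =
          Hs b i0 * X i b + (if b = a then ε * X i a else 0) := by
        intro b _
        by_cases h : b = a
        · subst h
          have hBa : B b i0 = Hs b i0 + ε := by simp [hB]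
          rw [hBa]; simp; ring
        · simp [hB, h]
      rw [Finset.sum_congr rfl hcong, Finset.sum_add_distrib,
        Finset.sum_ite_eq' At a (fun _ => ε * X i a), if_pos ha]
    have hSdiff : S B i0 - S Hs i0 = -2 * ε * v a + ε ^ 2 * ∑ i, (X i a) ^ 2 := by
      have : S B i0 - S Hs i0 =
          ∑ i, ((X i i0 - ∑ a' ∈ At, B a' i0 * X i a') ^ 2
            - (X i i0 - ∑ a' ∈ At, Hs a' i0 * X i a') ^ 2) := by
        simp only [hS, Finset.sum_sub_distrib]
      rw [this]
      have hterm : ∀ i : Fin m,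
          ((X i i0 - ∑ a' ∈ At, B a' i0 * X i a') ^ 2
            - (X i i0 - ∑ a' ∈ At, Hs a' i0 * X i a') ^ 2)
          = -2 * ε * (R i i0 * X i a) + ε ^ 2 * (X i a) ^ 2 := by
        intro i
        rw [hi0sum i, hR i i0]
        ring
      rw [Finset.sum_congr rfl fun i _ => hterm i, Finset.sum_add_distrib,
        ← Finset.mul_sum, ← Finset.mul_sum]
    have h1 : ∑ j, (S B j - S Hs j) = S B i0 - S Hs i0 := by
      refine Finset.sum_eq_single i0 (fun j _ hj => by rw [hSeq j hj]; ring)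
        (fun h => absurd (Finset.mem_univ i0) h)
    have h2 : 0 ≤ ∑ j, (S B j - S Hs j) := by
      rw [Finset.sum_sub_distrib]
      have := hle
      simp only [hS]
      linarith [hle]
    rw [h1, hSdiff] at h2
    exact h2
  -- (a) v a ≤ 0 for a ∈ At
  have hneg : ∀ a ∈ At, v a ≤ 0 := by
    intro a ha
    by_contra h
    push_neg at h
    set q := ∑ i, (X i a) ^ 2 with hqdef
    have hq' := hq a
    have hεpos : 0 < v a / q := div_pos h hq'
    have hk := key a ha (v a / q) (add_nonneg (hHs a i0) hεpos.le)
    have : -2 * (v a / q) * v a + (v a / q) ^ 2 * q = -(v a) ^ 2 / q := by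
      field_simp
      ring
    rw [this, neg_div] at hk
    have : 0 < (v a) ^ 2 / q := by positivity
    linarith
  -- (b) complementary slackness
  have hcomp : ∀ a ∈ At, Hs a i0 * v a = 0 := by
    intro a ha
    rcases eq_or_lt_of_le (hHs a i0) with h0 | h0
    · rw [← h0]; ring
    rcases eq_or_lt_of_le (hneg a ha) with h1 | h1
    · rw [h1]; ring
    exfalso
    set q := ∑ i, (X i a) ^ 2 with hqdef
    have hq' := hq a
    set t := min (Hs a i0) (-(v a) / q) with ht
    have htpos : 0 < t := lt_min h0 (div_pos (by linarith) hq')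
    have hk := key a ha (-t) (by
      have : t ≤ Hs a i0 := min_le_left _ _
      linarith)
    have htq : t * q ≤ -(v a) := by
      have h2 : t ≤ -(v a) / q := min_le_right _ _
      calc t * q ≤ (-(v a) / q) * q := by nlinarith
        _ = -(v a) := by exact div_mul_cancel₀ _ hq'.ne'
    have : -2 * (-t) * v a + (-t) ^ 2 * q = t * (2 * v a + t * q) := by ring
    rw [this] at hk
    have hbad : 2 * v a + t * q ≤ v a := by linarith
    nlinarith
  -- (c) residual column nonzero
  have hRne : ∃ i, R i i0 ≠ 0 := by
    by_contra h
    push_neg at h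
    exact hout ⟨fun a => Hs a i0, fun a => hHs a i0, fun i => by
      have := hR i i0
      rw [h i] at this
      linarith⟩
  -- v i0 = ‖R i0‖² > 0
  have hvi0 : 0 < v i0 := by
    obtain ⟨i1, hi1⟩ := hRne
    have hsplit : v i0 = (∑ i, (R i i0) ^ 2) + ∑ a ∈ At, Hs a i0 * v a := by
      have : ∀ i, R i i0 * X i i0 =
          (R i i0) ^ 2 + ∑ a ∈ At, Hs a i0 * (R i i0 * X i a) := by
        intro i
        have hx : X i i0 = R i i0 + ∑ a ∈ At, Hs a i0 * X i a := by
          rw [hR i i0]; ring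
        rw [hx, mul_add, Finset.mul_sum, ← sq]
        congr 1
        exact Finset.sum_congr rfl fun a _ => by ring
      simp only [hv]
      rw [Finset.sum_congr rfl fun i _ => this i, Finset.sum_add_distrib,
        Finset.sum_comm]
      congr 1
      refine Finset.sum_congr rfl fun a _ => ?_
      rw [Finset.mul_sum]
    rw [hsplit, Finset.sum_congr rfl hcomp]
    simp only [Finset.sum_const_zero, add_zero]
    exact Finset.sum_pos' (fun k _ => sq_nonneg _)
      ⟨i1, Finset.mem_univ i1, by positivity⟩
  -- maximize f over Fin n
  obtain ⟨j, -, hjmax⟩ := Finset.exists_max_image (Finset.univ : Finset (Fin n))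
    (fun k => v k / (∑ i, p i * X i k)) ⟨i0, Finset.mem_univ i0⟩
  have hfj : 0 < v j / (∑ i, p i * X i j) :=
    lt_of_lt_of_le (div_pos hvi0 (hpx i0)) (hjmax i0 (Finset.mem_univ i0))
  refine ⟨j, ?_, hfj, fun k => hjmax k (Finset.mem_univ k)⟩
  intro hjAt
  have : v j / (∑ i, p i * X i j) ≤ 0 :=
    div_nonpos_of_nonpos_of_nonneg (hneg j hjAt) (le_of_lt (hpx j))
  linarith
end
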